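/- Suppose a bounded holomorphic function f on the right half-plane H has asymptotic expansion ∑_{j=0}^∞ c_j e^{-λ_j z}, and suppose ∑_{j=0}^∞ e^{-λ_j d} < ∞ for some d > 0. Then the series ∑_{j=0}^∞ c_j e^{-λ_j z} converges uniformly to f(z) on H_d = {z : Re z ≥ d}. -/

import Mathlib

open Filter Complex Set Topology

/-- `∑_j c j e^{-lam j z}` is an asymptotic expansion of `f` on the right half-plane,
for a strictly increasing sequence of levels `0 = lam 0 < lam 1 < ⋯ → ∞`. -/
def HasHolAsymExp (f : ℂ → ℂ) (lam : ℕ → ℝ) (c : ℕ → ℂ) : Prop :=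
  lam 0 = 0 ∧ StrictMono lam ∧ Filter.Tendsto lam Filter.atTop Filter.atTop ∧
    ∀ N : ℕ, Filter.Tendsto
      (fun z : ℂ => ‖
          (f z - ∑ j ∈ Finset.range (N + 1), c j * Complex.exp (-(lam j : ℂ) * z))‖ *
        Real.exp (lam N * z.re))
      (Filter.comap Complex.re Filter.atTop) (nhds 0)

/-- Coefficient estimate: every coefficient of the asymptotic expansion of a bounded
holomorphic function is bounded by the bound of the function. -/
lemma coeff_bound (f : ℂ → ℂ) (lam : ℕ → ℝ) (c : ℕ → ℂ) (C : ℝ)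
    (hf : DifferentiableOn ℂ f {z : ℂ | 0 < z.re})
    (hC : ∀ z : ℂ, 0 < z.re → ‖f z‖ ≤ C)
    (hmono : StrictMono lam) (hlamnn : ∀ j, 0 ≤ lam j)
    (htail : ∀ N : ℕ, Tendsto (fun z : ℂ => ‖f z - ∑ j ∈ Finset.range (N + 1), c j * Complex.exp (-(lam j : ℂ) * z)‖ *
        Real.exp (lam N * z.re)) (comap Complex.re atTop) (nhds 0)) :
    ∀ N, ‖c N‖ ≤ C := by
  have hC0 : 0 ≤ C := le_trans (norm_nonneg _) (hC 1 (by norm_num))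
  intro N
  -- reduce to bound with σ > 0
  suffices h : ∀ σ ∈ Set.Ioi (0:ℝ), ‖c N‖ ≤ C * Real.exp (lam N * σ) by
    have hlim : Tendsto (fun σ : ℝ => C * Real.exp (lam N * σ)) (nhdsWithin 0 (Set.Ioi 0))
        (nhds (C * Real.exp (lam N * 0))) := by
      apply Tendsto.mono_left _ nhdsWithin_le_nhds
      exact (continuous_const.mul
        (Real.continuous_exp.comp (continuous_const.mul continuous_id))).tendsto 0
    rw [mul_zero, Real.exp_zero, mul_one] at hlim
    exact ge_of_tendsto hlim (eventually_mem_nhdsWithin.mono h)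
  intro σ hσ
  rw [Set.mem_Ioi] at hσ
  refine le_of_forall_pos_le_add fun ε hε => ?_
  -- choose abscissa R where the tail is ≤ ε
  obtain ⟨a, ha⟩ : ∃ a : ℝ, ∀ z : ℂ, a ≤ z.re → ‖f z - ∑ j ∈ Finset.range (N + 1), c j * Complex.exp (-(lam j : ℂ) * z)‖ *
        Real.exp (lam N * z.re) ≤ ε := by
    have := (htail N).eventually (ge_mem_nhds hε)
    rw [eventually_comap] at this
    rw [eventually_atTop] at this
    obtain ⟨a, ha⟩ := this
    exact ⟨a, fun z hz => ha z.re hz z rfl⟩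
  set R : ℝ := max a σ with hRdef
  have hσR : σ ≤ R := le_max_right _ _
  have haR : a ≤ R := le_max_left _ _
  have hR0 : 0 < R := lt_of_lt_of_le hσ hσR
  set lN : ℝ := lam N with hlNdef
  have hlN : 0 ≤ lN := hlamnn N
  set S : ℂ → ℂ := fun z => ∑ j ∈ Finset.range (N + 1), c j * Complex.exp (-(lam j : ℂ) * z)
    with hSdef
  set h : ℂ → ℂ := fun z => f z * Complex.exp ((lN : ℂ) * z) with hhdef
  -- basic facts about h
  have hdiff_h : DifferentiableOn ℂ h {z : ℂ | 0 < z.re} := by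
    apply hf.mul
    apply Differentiable.differentiableOn
    exact Complex.differentiable_exp.comp ((differentiable_const _).mul differentiable_id)
  have habs_h : ∀ z : ℂ, 0 < z.re → ‖h z‖ ≤ C * Real.exp (lN * z.re) := by
    intro z hz
    rw [hhdef]
    simp only [norm_mul, Complex.norm_exp]
    have : ((lN:ℂ) * z).re = lN * z.re := by simp
    rw [this]
    exact mul_le_mul_of_nonneg_right (hC z hz) (Real.exp_pos _).le
  have hline : ∀ s : ℝ, Continuous (fun t : ℝ => (s:ℂ) + (t:ℂ)*I) :=
    fun s => continuous_const.add (Complex.continuous_ofReal.mul continuous_const)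
  have hcont_line : ∀ s : ℝ, 0 < s → Continuous (fun t : ℝ => h ((s:ℂ) + (t:ℂ)*I)) := by
    intro s hs
    apply hdiff_h.continuousOn.comp_continuous (hline s)
    intro t
    simp [hs]
  have hScont : Continuous S := by
    rw [hSdef]
    exact continuous_finset_sum _ fun j _ => continuous_const.mul
      (Complex.continuous_exp.comp (continuous_const.mul continuous_id))
  have hecont : Continuous (fun z : ℂ => Complex.exp ((lN:ℂ) * z)) :=
    Complex.continuous_exp.comp (continuous_const.mul continuous_id)
  -- constants
  set B : ℝ := ∑ j ∈ Finset.range N,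
    ‖c j‖ * Real.exp ((lN - lam j) * R) * (2 / (lN - lam j)) with hBdef
  set K : ℝ := (B + 2 * ((R - σ) * (C * Real.exp (lN * R)))) / 2 with hKdef
  -- the key estimate for all T ≥ 1
  have key : ∀ T : ℝ, 1 ≤ T → ‖c N‖ ≤ C * Real.exp (lN * σ) + ε + K / T := by
    intro T hT
    have hT0 : 0 < T := lt_of_lt_of_le one_pos hT
    -- integrability on vertical lines
    have hint_v : ∀ s : ℝ, 0 < s → IntervalIntegrable (fun t : ℝ => h ((s:ℂ) + (t:ℂ)*I))
        MeasureTheory.volume (-T) T := fun s hs => (hcont_line s hs).intervalIntegrable _ _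
    -- bound on the vertical integral at σ
    have hVσ : ‖∫ t in (-T)..T, h ((σ:ℂ) + (t:ℂ)*I)‖ ≤ C * Real.exp (lN * σ) * |T - (-T)| := by
      apply intervalIntegral.norm_integral_le_of_norm_le_const
      intro t ht
      have : ((σ:ℂ) + (t:ℂ)*I).re = σ := by simp
      have h1 := habs_h ((σ:ℂ) + (t:ℂ)*I) (by rw [this]; exact hσ)
      rwa [this] at h1
    -- Cauchy's theorem on the rectangle [σ,R] × [-T,T]
    have hrect := Complex.integral_boundary_rect_eq_zero_of_differentiableOn h
      ⟨σ, -T⟩ ⟨R, T⟩ (by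
        apply hdiff_h.mono
        intro z hz
        rw [Complex.mem_reProdIm] at hz
        obtain ⟨h1, -⟩ := hz
        simp only [Complex.ofReal_re] at h1
        have : σ ≤ z.re := by
          rcases Set.mem_uIcc.1 h1 with ⟨h2, _⟩ | ⟨h2, _⟩
          · exact h2
          · exact le_trans hσR h2
        exact lt_of_lt_of_le hσ this)
    simp only [Complex.ofReal_re, Complex.ofReal_im] at hrect
    push_cast at hrect
    rw [smul_eq_mul, smul_eq_mul] at hrect
    -- names for the three integrals
    set Vs : ℂ := ∫ t in (-T)..T, h ((σ:ℂ) + (t:ℂ)*I) with hVsdef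
    set VR : ℂ := ∫ t in (-T)..T, h ((R:ℂ) + (t:ℂ)*I) with hVRdef
    set W : ℂ := ∫ t in (-T)..T,
      S ((R:ℂ)+(t:ℂ)*I) * Complex.exp ((lN:ℂ)*((R:ℂ)+(t:ℂ)*I)) with hWdef
    have habsT : |T - -T| = 2*T := by rw [abs_of_pos (by linarith)]; ring
    -- bounds on horizontal integrals
    have hhor : ∀ T' : ℝ, ‖∫ x in σ..R, h ((x:ℂ) + (T':ℂ)*I)‖
        ≤ C * Real.exp (lN * R) * |R - σ| := by
      intro T'
      apply intervalIntegral.norm_integral_le_of_norm_le_const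
      intro x hx
      rw [Set.uIoc_of_le hσR] at hx
      have hre : ((x:ℂ) + (T':ℂ)*I).re = x := by simp
      calc ‖h ((x:ℂ) + (T':ℂ)*I)‖ ≤ C * Real.exp (lN * x) := by
            have := habs_h ((x:ℂ) + (T':ℂ)*I) (by rw [hre]; exact lt_trans hσ hx.1)
            rwa [hre] at this
        _ ≤ C * Real.exp (lN * R) := by
            apply mul_le_mul_of_nonneg_left _ hC0
            exact Real.exp_le_exp.2 (mul_le_mul_of_nonneg_left hx.2 hlN)
    -- difference of vertical integrals via Cauchy
    have hdiffV : ‖VR - Vs‖ ≤ 2 * ((R - σ) * (C * Real.exp (lN * R))) := by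
      have heq : I * (VR - Vs) = (∫ x in σ..R, h ((x:ℂ) + (T:ℂ)*I))
          - ∫ x in σ..R, h ((x:ℂ) + (-(T:ℂ))*I) := by
        linear_combination hrect
      have : ‖VR - Vs‖ = ‖I * (VR - Vs)‖ := by
        rw [norm_mul, Complex.norm_I, one_mul]
      rw [this, heq]
      have habsRσ : |R - σ| = R - σ := abs_of_nonneg (by linarith)
      calc ‖(∫ x in σ..R, h ((x:ℂ) + (T:ℂ)*I)) - ∫ x in σ..R, h ((x:ℂ) + (-(T:ℂ))*I)‖
          ≤ ‖∫ x in σ..R, h ((x:ℂ) + (T:ℂ)*I)‖ + ‖∫ x in σ..R, h ((x:ℂ) + (-(T:ℂ))*I)‖ :=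
            norm_sub_le _ _
        _ ≤ C * Real.exp (lN * R) * |R - σ| + C * Real.exp (lN * R) * |R - σ| := by
            have h1 := hhor T
            have h2 := hhor (-T)
            push_cast at h2
            linarith
        _ = 2 * ((R - σ) * (C * Real.exp (lN * R))) := by rw [habsRσ]; ring
    -- bound on ‖Vs‖
    have hVs : ‖Vs‖ ≤ C * Real.exp (lN * σ) * (2*T) := by rw [← habsT]; exact hVσ
    -- the tail integral bound : ‖VR - W‖ ≤ ε * 2T
    have hSi : IntervalIntegrable
        (fun t : ℝ => S ((R:ℂ)+(t:ℂ)*I) * Complex.exp ((lN:ℂ)*((R:ℂ)+(t:ℂ)*I)))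
        MeasureTheory.volume (-T) T := by
      apply Continuous.intervalIntegrable
      exact (hScont.comp (hline R)).mul (hecont.comp (hline R))
    have hGbound : ‖VR - W‖ ≤ ε * (2*T) := by
      rw [hVRdef, hWdef, ← intervalIntegral.integral_sub (hint_v R hR0) hSi, ← habsT]
      apply intervalIntegral.norm_integral_le_of_norm_le_const
      intro t ht
      have hre : ((R:ℂ) + (t:ℂ)*I).re = R := by simp
      have hrw : h ((R:ℂ)+(t:ℂ)*I) - S ((R:ℂ)+(t:ℂ)*I) * Complex.exp ((lN:ℂ)*((R:ℂ)+(t:ℂ)*I))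
          = (f ((R:ℂ)+(t:ℂ)*I) - S ((R:ℂ)+(t:ℂ)*I)) * Complex.exp ((lN:ℂ)*((R:ℂ)+(t:ℂ)*I)) := by
        rw [hhdef]; ring
      rw [hrw, norm_mul, Complex.norm_exp]
      have h2 : ((lN:ℂ) * ((R:ℂ)+(t:ℂ)*I)).re = lN * R := by simp
      rw [h2]
      have := ha ((R:ℂ)+(t:ℂ)*I) (by rw [hre]; exact haR)
      rw [hre] at this
      simpa only [hSdef] using this
    -- expand W as a finite sum of exponential integrals
    have hWsum : W = ∑ j ∈ Finset.range (N+1), ∫ t in (-T)..T,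
        c j * Complex.exp (-(lam j:ℂ) * ((R:ℂ)+(t:ℂ)*I))
          * Complex.exp ((lN:ℂ)*((R:ℂ)+(t:ℂ)*I)) := by
      rw [hWdef, ← intervalIntegral.integral_finset_sum]
      · apply intervalIntegral.integral_congr
        intro t ht
        rw [hSdef]
        simp only [Finset.sum_mul]
      · intro j hj
        apply Continuous.intervalIntegrable
        exact ((continuous_const.mul (Complex.continuous_exp.comp
            ((continuous_const.mul (hline R))))).mul
          (Complex.continuous_exp.comp ((continuous_const.mul (hline R)))))
    -- the top term
    have htermN : (∫ t in (-T)..T, c N * Complex.exp (-(lam N:ℂ) * ((R:ℂ)+(t:ℂ)*I))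
        * Complex.exp ((lN:ℂ)*((R:ℂ)+(t:ℂ)*I))) = ((T - -T : ℝ)) • c N := by
      have hrw : ∀ t : ℝ, c N * Complex.exp (-(lam N:ℂ) * ((R:ℂ)+(t:ℂ)*I))
          * Complex.exp ((lN:ℂ)*((R:ℂ)+(t:ℂ)*I)) = c N := by
        intro t
        rw [mul_assoc, ← Complex.exp_add]
        have : -(lam N:ℂ) * ((R:ℂ)+(t:ℂ)*I) + (lN:ℂ)*((R:ℂ)+(t:ℂ)*I) = 0 := by
          rw [hlNdef]; ring
        rw [this, Complex.exp_zero, mul_one]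
      rw [intervalIntegral.integral_congr (fun t _ => hrw t), intervalIntegral.integral_const]
    -- the lower terms
    have hterm : ∀ j ∈ Finset.range N, ‖∫ t in (-T)..T,
        c j * Complex.exp (-(lam j:ℂ) * ((R:ℂ)+(t:ℂ)*I))
          * Complex.exp ((lN:ℂ)*((R:ℂ)+(t:ℂ)*I))‖
        ≤ ‖c j‖ * Real.exp ((lN - lam j) * R) * (2 / (lN - lam j)) := by
      intro j hj
      rw [Finset.mem_range] at hj
      have hμ0 : 0 < lN - lam j := sub_pos.2 (hmono hj)
      have hrw : ∀ t : ℝ, c j * Complex.exp (-(lam j:ℂ) * ((R:ℂ)+(t:ℂ)*I))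
          * Complex.exp ((lN:ℂ)*((R:ℂ)+(t:ℂ)*I))
          = (c j * Complex.exp ((((lN - lam j) * R : ℝ) : ℂ)))
            * Complex.exp ((((lN - lam j : ℝ) : ℂ) * I) * (t:ℂ)) := by
        intro t
        rw [mul_assoc, ← Complex.exp_add, mul_assoc, ← Complex.exp_add]
        congr 1
        push_cast
        ring
      rw [intervalIntegral.integral_congr (fun t _ => hrw t),
        intervalIntegral.integral_const_mul,
        integral_exp_mul_complex (by
          simp only [ne_eq, mul_eq_zero, not_or]
          constructor
          · exact_mod_cast ne_of_gt hμ0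
          · exact I_ne_zero)]
      have e1 : ∀ t : ℝ, ‖Complex.exp ((((lN - lam j : ℝ) : ℂ) * I) * (t:ℂ))‖ = 1 := by
        intro t
        rw [Complex.norm_exp]
        norm_num [Complex.mul_re]
      have e3 : ‖(((lN - lam j : ℝ) : ℂ) * I)‖ = lN - lam j := by
        rw [norm_mul, Complex.norm_I, mul_one, Complex.norm_real,
          Real.norm_eq_abs, abs_of_pos hμ0]
      have e4 : ‖Complex.exp ((((lN - lam j) * R : ℝ) : ℂ))‖ = Real.exp ((lN - lam j) * R) := by
        rw [Complex.norm_exp, Complex.ofReal_re]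
      rw [norm_mul, norm_mul, norm_div, e3, e4]
      have e5 : ‖Complex.exp ((((lN - lam j : ℝ) : ℂ) * I) * (T:ℂ))
          - Complex.exp ((((lN - lam j : ℝ) : ℂ) * I) * ((-T : ℝ):ℂ))‖ ≤ 2 :=
        (norm_sub_le _ _).trans (by rw [e1, e1]; norm_num)
      exact mul_le_mul_of_nonneg_left ((div_le_div_iff_of_pos_right hμ0).2 e5)
        (by positivity)
    -- assemble the estimate
    set E' : ℂ := ∑ j ∈ Finset.range N, ∫ t in (-T)..T,
      c j * Complex.exp (-(lam j:ℂ) * ((R:ℂ)+(t:ℂ)*I))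
        * Complex.exp ((lN:ℂ)*((R:ℂ)+(t:ℂ)*I)) with hE'def
    have hE'B : ‖E'‖ ≤ B := by
      rw [hE'def, hBdef]
      exact (norm_sum_le _ _).trans (Finset.sum_le_sum hterm)
    have hWE : W = E' + ((T - -T : ℝ)) • c N := by
      rw [hWsum, Finset.sum_range_succ, htermN, hE'def]
    have h2T : 2 * T * ‖c N‖ ≤ ‖W‖ + B := by
      have e0 : ‖((T - -T : ℝ)) • c N‖ = 2 * T * ‖c N‖ := by
        rw [norm_smul, Real.norm_eq_abs, habsT]
      calc 2 * T * ‖c N‖ = ‖((T - -T : ℝ)) • c N‖ := e0.symm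
        _ = ‖W - E'‖ := by rw [hWE]; congr 1; ring
        _ ≤ ‖W‖ + ‖E'‖ := norm_sub_le _ _
        _ ≤ ‖W‖ + B := by linarith
    have hWb : ‖W‖ ≤ C * Real.exp (lN * σ) * (2*T)
        + 2 * ((R - σ) * (C * Real.exp (lN * R))) + ε * (2*T) := by
      calc ‖W‖ = ‖Vs + (VR - Vs) - (VR - W)‖ := by congr 1; ring
        _ ≤ ‖Vs + (VR - Vs)‖ + ‖VR - W‖ := norm_sub_le _ _
        _ ≤ ‖Vs‖ + ‖VR - Vs‖ + ‖VR - W‖ := by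
            linarith [norm_add_le Vs (VR - Vs)]
        _ ≤ _ := by linarith
    have hfin : ‖c N‖ * (2*T) ≤ (C * Real.exp (lN * σ) + ε + K / T) * (2*T) := by
      have hKT : K / T * (2*T) = 2 * K := by field_simp
      have hKval : 2 * K = B + 2 * ((R - σ) * (C * Real.exp (lN * R))) := by
        rw [hKdef]; ring
      nlinarith [h2T, hWb]
    exact le_of_mul_le_mul_right hfin (by positivity)
  -- let T → ∞
  have hlim : Tendsto (fun T : ℝ => C * Real.exp (lN * σ) + ε + K / T) atTop
      (𝓝 (C * Real.exp (lN * σ) + ε + 0)) :=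
    (tendsto_const_nhds.add tendsto_const_nhds).add (tendsto_const_nhds.div_atTop tendsto_id)
  have := ge_of_tendsto hlim (eventually_atTop.2 ⟨1, key⟩)
  rw [add_zero] at this
  exact this

set_option maxHeartbeats 1000000 in
/-- **Uniform convergence of an asymptotic expansion.** If a bounded holomorphic
function `f` on the right half-plane has an asymptotic expansion `∑ c j e^{-lam j z}`
and `∑ e^{-lam j d} < ∞` for some `d > 0`, then the series `∑ c j e^{-lam j z}`
converges uniformly to `f` on `H_d = {Re z ≥ d}`. -/
theorem stmt_8 (f : ℂ → ℂ) (lam : ℕ → ℝ) (c : ℕ → ℂ) (d : ℝ)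
    (hf : DifferentiableOn ℂ f {z : ℂ | 0 < z.re})
    (hbdd : ∃ C : ℝ, ∀ z : ℂ, 0 < z.re → ‖f z‖ ≤ C)
    (hae : HasHolAsymExp f lam c)
    (hd : 0 < d)
    (hsum : Summable (fun j => Real.exp (-lam j * d))) :
    TendstoUniformlyOn
      (fun N : ℕ => fun z : ℂ => ∑ j ∈ Finset.range (N + 1), c j * Complex.exp (-(lam j : ℂ) * z))
      f Filter.atTop {z : ℂ | d ≤ z.re} := by
  unfold HasHolAsymExp at hae
  obtain ⟨C, hC⟩ := hbdd
  have hC0 : 0 ≤ C := le_trans (norm_nonneg _) (hC 1 (by norm_num))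
  obtain ⟨hlam0, hmono, hlamtop, htail⟩ := hae
  have hlamnn : ∀ j, 0 ≤ lam j := fun j => hlam0 ▸ hmono.monotone (Nat.zero_le j)
  have hcb : ∀ j, ‖c j‖ ≤ C := coeff_bound f lam c C hf hC hmono hlamnn htail
  -- term bounds on s = {d ≤ re z}
  have hbound : ∀ (j : ℕ) (z : ℂ), z ∈ {z : ℂ | d ≤ z.re} →
      ‖c j * Complex.exp (-(lam j:ℂ)*z)‖ ≤ C * Real.exp (-lam j * d) := by
    intro j z hz
    rw [norm_mul, Complex.norm_exp]
    have hre : (-(lam j:ℂ)*z).re = -lam j * z.re := by simp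
    rw [hre]
    apply mul_le_mul (hcb j) _ (Real.exp_pos _).le hC0
    apply Real.exp_le_exp.2
    have : d ≤ z.re := hz
    nlinarith [hlamnn j]
  have hu : Summable (fun j => C * Real.exp (-lam j * d)) := hsum.mul_left C
  set g : ℂ → ℂ := fun z => ∑' j, c j * Complex.exp (-(lam j:ℂ)*z) with hgdef
  have huconv : TendstoUniformlyOn
      (fun N (z:ℂ) => ∑ j ∈ Finset.range N, c j * Complex.exp (-(lam j:ℂ)*z)) g atTop
      {z : ℂ | d ≤ z.re} := tendstoUniformlyOn_tsum_nat hu hbound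
  have huconv' : TendstoUniformlyOn
      (fun N (z:ℂ) => ∑ j ∈ Finset.range (N+1), c j * Complex.exp (-(lam j:ℂ)*z)) g atTop
      {z : ℂ | d ≤ z.re} :=
    fun u hu' => (tendsto_add_atTop_nat 1).eventually (huconv u hu')
  -- it remains to prove that g = f on s
  have hEq : Set.EqOn g f {z : ℂ | d ≤ z.re} := by
    have hopen : IsOpen {z : ℂ | d < z.re} := isOpen_lt continuous_const Complex.continuous_re
    have hpart_cont : ∀ N : ℕ, Continuous
        (fun z : ℂ => ∑ j ∈ Finset.range (N+1), c j * Complex.exp (-(lam j:ℂ)*z)) := by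
      intro N
      exact continuous_finset_sum _ fun j _ => continuous_const.mul
        (Complex.continuous_exp.comp (continuous_const.mul continuous_id))
    have hpart_diff : ∀ N : ℕ, Differentiable ℂ
        (fun z : ℂ => ∑ j ∈ Finset.range (N+1), c j * Complex.exp (-(lam j:ℂ)*z)) := by
      intro N
      exact Differentiable.fun_sum fun j _ => (differentiable_const _).mul
        (Complex.differentiable_exp.comp ((differentiable_const _).mul differentiable_id))
    have hg_cont : ContinuousOn g {z : ℂ | d ≤ z.re} :=
      huconv'.continuousOn (Eventually.of_forall fun N => (hpart_cont N).continuousOn).frequently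
    have hg_diff : DifferentiableOn ℂ g {z : ℂ | d < z.re} := by
      apply TendstoLocallyUniformlyOn.differentiableOn
        ((huconv'.mono (fun z (hz : d < z.re) => le_of_lt hz)).tendstoLocallyUniformlyOn)
        (Eventually.of_forall fun N => (hpart_diff N).differentiableOn) hopen
    -- summability at each point of s
    have hgsum : ∀ z : ℂ, z ∈ {z : ℂ | d ≤ z.re} →
        Summable (fun j => c j * Complex.exp (-(lam j:ℂ)*z)) :=
      fun z hz => Summable.of_norm_bounded hu (fun j => hbound j z hz)
    -- uniform bound on g
    set Cg : ℝ := ∑' j, C * Real.exp (-lam j * d) with hCgdef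
    have hgnorm : ∀ z ∈ {z : ℂ | d ≤ z.re}, ‖g z‖ ≤ Cg :=
      fun z hz => tsum_of_norm_bounded hu.hasSum (fun j => hbound j z hz)
    -- tail bound: for z ∈ s,  ‖g z - S_M z‖ ≤ D M * exp (-lam (M+1) * z.re)
    have htailg : ∀ M : ℕ, ∃ D : ℝ, ∀ z ∈ {z : ℂ | d ≤ z.re},
        ‖g z - ∑ j ∈ Finset.range (M+1), c j * Complex.exp (-(lam j:ℂ)*z)‖
          ≤ D * Real.exp (-lam (M+1) * z.re) := by
      intro M
      have hshift : Summable (fun j => Real.exp (-lam (j + (M+1)) * d)) :=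
        (summable_nat_add_iff (f := fun j => Real.exp (-lam j * d)) (M+1)).2 hsum
      refine ⟨C * Real.exp (lam (M+1) * d) * ∑' j, Real.exp (-lam (j + (M+1)) * d),
        fun z hz => ?_⟩
      have hzre : d ≤ z.re := hz
      have hdecomp : g z - ∑ j ∈ Finset.range (M+1), c j * Complex.exp (-(lam j:ℂ)*z)
          = ∑' j, c (j + (M+1)) * Complex.exp (-(lam (j + (M+1)):ℂ)*z) := by
        rw [hgdef]
        simp only
        rw [← Summable.sum_add_tsum_nat_add (M+1) (hgsum z hz)]
        ring
      rw [hdecomp]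
      have hmaj : ∀ j : ℕ, ‖c (j + (M+1)) * Complex.exp (-(lam (j + (M+1)):ℂ)*z)‖
          ≤ (C * Real.exp (lam (M+1) * d) * Real.exp (-lam (M+1) * z.re))
            * Real.exp (-lam (j + (M+1)) * d) := by
        intro j
        rw [norm_mul, Complex.norm_exp]
        have hre : (-(lam (j + (M+1)):ℂ)*z).re = -lam (j + (M+1)) * z.re := by simp
        rw [hre]
        have h1 : lam (M+1) ≤ lam (j + (M+1)) := hmono.monotone (Nat.le_add_left _ _)
        have h2 : Real.exp (-lam (j + (M+1)) * z.re)
            ≤ Real.exp (lam (M+1) * d) * Real.exp (-lam (M+1) * z.re)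
              * Real.exp (-lam (j + (M+1)) * d) := by
          rw [← Real.exp_add, ← Real.exp_add]
          apply Real.exp_le_exp.2
          nlinarith
        calc ‖c (j + (M+1))‖ * Real.exp (-lam (j + (M+1)) * z.re)
            ≤ C * (Real.exp (lam (M+1) * d) * Real.exp (-lam (M+1) * z.re)
              * Real.exp (-lam (j + (M+1)) * d)) :=
              mul_le_mul (hcb _) h2 (Real.exp_pos _).le hC0
          _ = (C * Real.exp (lam (M+1) * d) * Real.exp (-lam (M+1) * z.re))
              * Real.exp (-lam (j + (M+1)) * d) := by ring
      have := tsum_of_norm_bounded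
        ((hshift.mul_left (C * Real.exp (lam (M+1) * d) * Real.exp (-lam (M+1) * z.re))).hasSum)
        hmaj
      calc ‖∑' j, c (j + (M+1)) * Complex.exp (-(lam (j + (M+1)):ℂ)*z)‖
          ≤ ∑' j, (C * Real.exp (lam (M+1) * d) * Real.exp (-lam (M+1) * z.re))
            * Real.exp (-lam (j + (M+1)) * d) := this
        _ = (C * Real.exp (lam (M+1) * d) * ∑' j, Real.exp (-lam (j + (M+1)) * d))
            * Real.exp (-lam (M+1) * z.re) := by
            rw [tsum_mul_left]
            ring
    -- now apply Phragmen-Lindelof to F = f(⋅+d), G = g(⋅+d)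
    have hmapsTo : ∀ z : ℂ, 0 ≤ z.re → (z + (d:ℂ)) ∈ {z : ℂ | d ≤ z.re} := by
      intro z hz
      simp only [Set.mem_setOf_eq, Complex.add_re, Complex.ofReal_re]
      linarith
    have hmapsTo' : ∀ z : ℂ, 0 ≤ z.re → 0 < (z + (d:ℂ)).re := by
      intro z hz
      simp only [Complex.add_re, Complex.ofReal_re]
      linarith
    have haddcont : Continuous (fun z : ℂ => z + (d:ℂ)) := continuous_id.add continuous_const
    have hadddiff : Differentiable ℂ (fun z : ℂ => z + (d:ℂ)) :=
      differentiable_id.add_const _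
    have hFd : DiffContOnCl ℂ (fun z => f (z + (d:ℂ))) {z : ℂ | 0 < z.re} := by
      constructor
      · exact hf.comp hadddiff.differentiableOn
          (fun z hz => hmapsTo' z (le_of_lt hz))
      · rw [closure_setOf_lt_re]
        exact hf.continuousOn.comp haddcont.continuousOn
          (fun z hz => hmapsTo' z hz)
    have hGd : DiffContOnCl ℂ (fun z => g (z + (d:ℂ))) {z : ℂ | 0 < z.re} := by
      constructor
      · apply hg_diff.comp hadddiff.differentiableOn
        intro z hz
        simp only [Set.mem_setOf_eq, Complex.add_re, Complex.ofReal_re]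
        exact lt_add_of_pos_left d hz
      · rw [closure_setOf_lt_re]
        exact hg_cont.comp haddcont.continuousOn (fun z hz => hmapsTo z hz)
    have hFexp : ∃ cc < (2 : ℝ), ∃ B, (fun z => f (z + (d:ℂ)))
        =O[Bornology.cobounded ℂ ⊓ Filter.principal {z : ℂ | 0 < z.re}]
          fun z => Real.exp (B * ‖z‖ ^ cc) := by
      refine ⟨1, one_lt_two, 0, Asymptotics.IsBigO.of_bound C ?_⟩
      apply Filter.Eventually.filter_mono inf_le_right
      rw [eventually_principal]
      intro z hz
      simp only [zero_mul, Real.exp_zero, norm_one, mul_one]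
      exact hC _ (hmapsTo' z (le_of_lt hz))
    have hGexp : ∃ cc < (2 : ℝ), ∃ B, (fun z => g (z + (d:ℂ)))
        =O[Bornology.cobounded ℂ ⊓ Filter.principal {z : ℂ | 0 < z.re}]
          fun z => Real.exp (B * ‖z‖ ^ cc) := by
      refine ⟨1, one_lt_two, 0, Asymptotics.IsBigO.of_bound Cg ?_⟩
      apply Filter.Eventually.filter_mono inf_le_right
      rw [eventually_principal]
      intro z hz
      simp only [zero_mul, Real.exp_zero, norm_one, mul_one]
      exact hgnorm _ (hmapsTo z (le_of_lt hz))
    have hre_decay : Asymptotics.SuperpolynomialDecay atTop Real.exp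
        (fun x : ℝ => ‖f ((x:ℂ) + (d:ℂ)) - g ((x:ℂ) + (d:ℂ))‖) := by
      intro n
      -- choose M with n ≤ lam M
      obtain ⟨M, hM⟩ := (hlamtop.eventually_ge_atTop (n:ℝ)).exists
      obtain ⟨D, hD⟩ := htailg M
      have hD0 : 0 ≤ D := by
        have h1 := (norm_nonneg (g ((d:ℂ)) - ∑ j ∈ Finset.range (M+1),
          c j * Complex.exp (-(lam j:ℂ)*(d:ℂ)))).trans (hD (d:ℂ) (by simp))
        nlinarith [Real.exp_pos (-lam (M+1) * ((d:ℂ)).re)]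
      have hlM : (n:ℝ) ≤ lam M := hM
      have hlM1 : (n:ℝ) < lam (M+1) := lt_of_le_of_lt hlM (hmono (Nat.lt_succ_self M))
      -- the comparison functions
      have hm : Tendsto (fun x : ℝ => (x:ℂ) + (d:ℂ)) atTop (comap Complex.re atTop) := by
        rw [tendsto_comap_iff]
        have : (Complex.re ∘ fun x : ℝ => (x:ℂ) + (d:ℂ)) = fun x : ℝ => x + d := by
          funext x; simp
        rw [this]
        exact tendsto_atTop_add_const_right _ _ tendsto_id
      have hφ : Tendsto (fun x : ℝ => ‖f ((x:ℂ) + (d:ℂ)) - ∑ j ∈ Finset.range (M+1),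
            c j * Complex.exp (-(lam j:ℂ)*((x:ℂ) + (d:ℂ)))‖ *
          Real.exp (lam M * ((x:ℂ) + (d:ℂ)).re)) atTop (𝓝 0) := (htail M).comp hm
      have hψ : Tendsto (fun x : ℝ => (D * Real.exp (-lam (M+1) * d))
          * Real.exp (((n:ℝ) - lam (M+1)) * x)) atTop (𝓝 0) := by
        have h1 : Tendsto (fun x : ℝ => Real.exp (((n:ℝ) - lam (M+1)) * x)) atTop (𝓝 0) := by
          rw [Real.tendsto_exp_comp_nhds_zero]
          have h2 : Tendsto (fun x : ℝ => (lam (M+1) - (n:ℝ)) * x) atTop atTop :=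
            Tendsto.const_mul_atTop (by linarith) tendsto_id
          exact (tendsto_neg_atTop_atBot.comp h2).congr (fun x => by simp; ring)
        simpa using h1.const_mul (D * Real.exp (-lam (M+1) * d))
      apply squeeze_zero' (g := fun x : ℝ => ‖f ((x:ℂ) + (d:ℂ)) - ∑ j ∈ Finset.range (M+1),
            c j * Complex.exp (-(lam j:ℂ)*((x:ℂ) + (d:ℂ)))‖ *
          Real.exp (lam M * ((x:ℂ) + (d:ℂ)).re)
          + (D * Real.exp (-lam (M+1) * d)) * Real.exp (((n:ℝ) - lam (M+1)) * x))
        (Eventually.of_forall fun x => by positivity) ?_ (by simpa using hφ.add hψ)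
      filter_upwards [eventually_ge_atTop (0:ℝ)] with x hx
      set w : ℂ := (x:ℂ) + (d:ℂ) with hwdef
      have hwre : w.re = x + d := by simp [hwdef]
      set A : ℝ := ‖f w - ∑ j ∈ Finset.range (M+1),
        c j * Complex.exp (-(lam j:ℂ)*w)‖ with hAdef
      have hA0 : 0 ≤ A := norm_nonneg _
      have h2 := hD w (by rw [Set.mem_setOf_eq, hwre]; linarith)
      rw [hwre] at h2 ⊢
      have h1 : ‖f w - g w‖ ≤ A + ‖g w - ∑ j ∈ Finset.range (M+1),
          c j * Complex.exp (-(lam j:ℂ)*w)‖ := by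
        rw [hAdef]
        calc ‖f w - g w‖ = ‖(f w - ∑ j ∈ Finset.range (M+1), c j * Complex.exp (-(lam j:ℂ)*w))
            - (g w - ∑ j ∈ Finset.range (M+1), c j * Complex.exp (-(lam j:ℂ)*w))‖ := by
              congr 1; ring
          _ ≤ _ := norm_sub_le _ _
      have hexpn : Real.exp x ^ n = Real.exp ((n:ℝ) * x) := by
        rw [← Real.exp_nat_mul]
      rw [hexpn]
      have hnx : Real.exp ((n:ℝ) * x) ≤ Real.exp (lam M * (x + d)) := by
        apply Real.exp_le_exp.2
        nlinarith [hlamnn M]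
      have hprod : Real.exp ((n:ℝ) * x) * (D * Real.exp (-lam (M+1) * (x + d)))
          = D * Real.exp (-lam (M+1) * d) * Real.exp (((n:ℝ) - lam (M+1)) * x) := by
        have harg : (n:ℝ)*x + (-lam (M+1) * (x+d))
            = (-lam (M+1) * d) + (((n:ℝ) - lam (M+1)) * x) := by ring
        calc Real.exp ((n:ℝ) * x) * (D * Real.exp (-lam (M+1) * (x + d)))
            = D * Real.exp ((n:ℝ)*x + (-lam (M+1) * (x+d))) := by rw [Real.exp_add]; ring
          _ = D * Real.exp ((-lam (M+1) * d) + (((n:ℝ) - lam (M+1)) * x)) := by rw [harg]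
          _ = D * Real.exp (-lam (M+1) * d) * Real.exp (((n:ℝ) - lam (M+1)) * x) := by
              rw [Real.exp_add]; ring
      calc Real.exp ((n:ℝ) * x) * ‖f w - g w‖
          ≤ Real.exp ((n:ℝ) * x) * (A + D * Real.exp (-lam (M+1) * (x + d))) := by
            apply mul_le_mul_of_nonneg_left _ (Real.exp_pos _).le
            exact h1.trans (add_le_add_right h2 A)
        _ = Real.exp ((n:ℝ) * x) * A + Real.exp ((n:ℝ) * x) * (D * Real.exp (-lam (M+1) * (x+d))) := by
            ring
        _ ≤ A * Real.exp (lam M * (x + d))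
            + D * Real.exp (-lam (M+1) * d) * Real.exp (((n:ℝ) - lam (M+1)) * x) := by
            rw [hprod]
            apply add_le_add_left
            rw [mul_comm]
            exact mul_le_mul_of_nonneg_left hnx hA0
    have him_f : ∃ CC, ∀ x : ℝ, ‖f ((x:ℝ) * I + (d:ℂ))‖ ≤ CC := by
      refine ⟨C, fun x => ?_⟩
      apply hC
      simp [hd]
    have him_g : ∃ CC, ∀ x : ℝ, ‖g ((x:ℝ) * I + (d:ℂ))‖ ≤ CC := by
      refine ⟨Cg, fun x => ?_⟩
      apply hgnorm
      simp [Set.mem_setOf_eq]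
    have key := PhragmenLindelof.eqOn_right_half_plane_of_superexponential_decay
      hFd hGd hFexp hGexp hre_decay him_f him_g
    intro z hz
    have hz' : (0:ℝ) ≤ (z - (d:ℂ)).re := by
      simp only [Complex.sub_re, Complex.ofReal_re]
      have : d ≤ z.re := hz
      linarith
    have := key hz'
    simp only [sub_add_cancel] at this
    exact this.symm
  exact huconv'.congr_right hEq
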